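/- If uncertain variables X and Y are disassociated at levels (δ, δ₂), then the family 𝒞 = {𝒞(x) : x ∈ ⟦X⟧}, where 𝒞(x) is the set of all points δ-connected to x via ⟦X|Y⟧, is a δ-overlap family of ⟦X⟧; moreover any two distinct sets 𝒞(x₁) ≠ 𝒞(x₂) in this family satisfy m_𝒳(𝒞(x₁) ∩ 𝒞(x₂)) = 0. -/

import Mathlib

open Set Real

namespace NSIT

variable {Ω 𝒳 𝒴 : Type*}

/-- The conditional range `⟦X|y⟧` of an uncertain variable `X` given that the
uncertain variable `Y` takes the value `y`. -/
def condRange (X : Ω → 𝒳) (Y : Ω → 𝒴) (y : 𝒴) : Set 𝒳 :=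
  X '' {ω | Y ω = y}

/-- `m` is an uncertainty function: it vanishes on the empty set, is positive (and
finite, being real-valued) on nonempty sets, and is strongly transitive. -/
def IsUncertaintyFn (m : Set 𝒳 → ℝ) : Prop :=
  m ∅ = 0 ∧ (∀ S : Set 𝒳, S.Nonempty → 0 < m S) ∧
    ∀ S₁ S₂ : Set 𝒳, max (m S₁) (m S₂) ≤ m (S₁ ∪ S₂)

/-- The set of association `𝒜(X;Y)`: all nonzero relative uncertainties of
intersections of two distinct conditional ranges of `X` given values of `Y`. -/
def assocSet (mX : Set 𝒳 → ℝ) (X : Ω → 𝒳) (Y : Ω → 𝒴) : Set ℝ :=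
  {r | r ≠ 0 ∧ ∃ y₁ ∈ Set.range Y, ∃ y₂ ∈ Set.range Y, y₁ ≠ y₂ ∧
    r = mX (condRange X Y y₁ ∩ condRange X Y y₂) / mX (Set.range X)}

/-- `X` and `Y` are associated at levels `(δ₁, δ₂)`:
`𝒜(X;Y) ⪯ δ₁` and `𝒜(Y;X) ⪯ δ₂` (vacuously true for empty association sets). -/
def Associated (mX : Set 𝒳 → ℝ) (mY : Set 𝒴 → ℝ) (X : Ω → 𝒳) (Y : Ω → 𝒴)
    (δ₁ δ₂ : ℝ) : Prop :=
  (∀ r ∈ assocSet mX X Y, r ≤ δ₁) ∧ ∀ r ∈ assocSet mY Y X, r ≤ δ₂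

/-- `X` and `Y` are disassociated at levels `(δ₁, δ₂)`:
`𝒜(X;Y) ≻ δ₁` and `𝒜(Y;X) ≻ δ₂` (which in particular requires the association
sets to be nonempty). -/
def Disassociated (mX : Set 𝒳 → ℝ) (mY : Set 𝒴 → ℝ) (X : Ω → 𝒳) (Y : Ω → 𝒴)
    (δ₁ δ₂ : ℝ) : Prop :=
  (assocSet mX X Y).Nonempty ∧ (∀ r ∈ assocSet mX X Y, δ₁ < r) ∧
    (assocSet mY Y X).Nonempty ∧ ∀ r ∈ assocSet mY Y X, δ₂ < r

/-- `x₁` and `x₂` are `δ`-connected via `⟦X|Y⟧`: there is a finite chain of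
conditional ranges joining them whose consecutive intersections have relative
uncertainty greater than `δ`. -/
def Conn (mX : Set 𝒳 → ℝ) (X : Ω → 𝒳) (Y : Ω → 𝒴) (δ : ℝ) (x₁ x₂ : 𝒳) : Prop :=
  ∃ (N : ℕ) (ys : Fin (N + 1) → 𝒴),
    x₁ ∈ condRange X Y (ys 0) ∧ x₂ ∈ condRange X Y (ys (Fin.last N)) ∧
    ∀ i : Fin N,
      δ < mX (condRange X Y (ys i.succ) ∩ condRange X Y (ys i.castSucc)) /
        mX (Set.range X)

/-- `F` is a `δ`-overlap family (for `X` given `Y`): it covers `⟦X⟧`, each member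
is `δ`-connected and contains a singly `δ`-connected set of the form `⟦X|y⟧`,
any two distinct members overlap with uncertainty at most `δ · m(⟦X⟧)`, and every
conditional range `⟦X|y⟧` is contained in some member. -/
def IsOverlapFamily (mX : Set 𝒳 → ℝ) (X : Ω → 𝒳) (Y : Ω → 𝒴) (δ : ℝ)
    (F : Set (Set 𝒳)) : Prop :=
  ⋃₀ F = Set.range X ∧
  (∀ S ∈ F, (∀ x₁ ∈ S, ∀ x₂ ∈ S, Conn mX X Y δ x₁ x₂) ∧
    ∃ y ∈ Set.range Y, condRange X Y y ⊆ S) ∧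
  (∀ S₁ ∈ F, ∀ S₂ ∈ F, S₁ ≠ S₂ → mX (S₁ ∩ S₂) ≤ δ * mX (Set.range X)) ∧
  ∀ y ∈ Set.range Y, ∃ S ∈ F, condRange X Y y ⊆ S

/-- The `δ`-connected component `𝒞(x)`: all points of `⟦X⟧` that are
`δ`-connected to `x` via `⟦X|Y⟧`. -/
def connComp (mX : Set 𝒳 → ℝ) (X : Ω → 𝒳) (Y : Ω → 𝒴) (δ : ℝ) (x : 𝒳) :
    Set 𝒳 :=
  {x₁ ∈ Set.range X | Conn mX X Y δ x x₁}

def Step (mX : Set 𝒳 → ℝ) (X : Ω → 𝒳) (Y : Ω → 𝒴) (δ : ℝ) (y₁ y₂ : 𝒴) : Prop :=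
  δ < mX (condRange X Y y₂ ∩ condRange X Y y₁) / mX (Set.range X)

theorem conn_iff (mX : Set 𝒳 → ℝ) (X : Ω → 𝒳) (Y : Ω → 𝒴) (δ : ℝ) (x₁ x₂ : 𝒳) :
    Conn mX X Y δ x₁ x₂ ↔ ∃ y₁ y₂, x₁ ∈ condRange X Y y₁ ∧ x₂ ∈ condRange X Y y₂ ∧
      Relation.ReflTransGen (Step mX X Y δ) y₁ y₂ := by
  constructor
  · rintro ⟨N, ys, h1, h2, h3⟩
    refine ⟨ys 0, ys (Fin.last N), h1, h2, ?_⟩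
    have key : ∀ i : Fin (N + 1), Relation.ReflTransGen (Step mX X Y δ) (ys 0) (ys i) := by
      intro i
      induction i using Fin.induction with
      | zero => exact Relation.ReflTransGen.refl
      | succ j ih => exact ih.tail (h3 j)
    exact key (Fin.last N)
  · rintro ⟨y₁, y₂, h1, h2, h⟩
    have key : ∀ y₂', Relation.ReflTransGen (Step mX X Y δ) y₁ y₂' →
        ∃ (N : ℕ) (ys : Fin (N + 1) → 𝒴), ys 0 = y₁ ∧ ys (Fin.last N) = y₂' ∧
          ∀ i : Fin N, Step mX X Y δ (ys i.castSucc) (ys i.succ) := by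
      intro y₂' h
      induction h with
      | refl => exact ⟨0, fun _ => y₁, rfl, rfl, fun i => i.elim0⟩
      | @tail b c hab hbc ih =>
        obtain ⟨N, ys, h0, hl, hc⟩ := ih
        refine ⟨N + 1, Fin.snoc ys c, ?_, ?_, ?_⟩
        · rw [← Fin.castSucc_zero, Fin.snoc_castSucc]; exact h0
        · rw [Fin.snoc_last]
        · intro i
          induction i using Fin.lastCases with
          | last =>
            rw [Fin.succ_last, Fin.snoc_last, Fin.snoc_castSucc, hl]
            exact hbc
          | cast j =>
            rw [Fin.succ_castSucc, Fin.snoc_castSucc, Fin.snoc_castSucc]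
            exact hc j
    obtain ⟨N, ys, h0, hl, hc⟩ := key y₂ h
    exact ⟨N, ys, h0 ▸ h1, hl ▸ h2, fun i => hc i⟩


theorem step_symm (mX : Set 𝒳 → ℝ) (X : Ω → 𝒳) (Y : Ω → 𝒴) (δ : ℝ) :
    Symmetric (Step mX X Y δ) := by
  intro a b h
  unfold Step at h ⊢
  rwa [Set.inter_comm]

theorem conn_symm {mX : Set 𝒳 → ℝ} {X : Ω → 𝒳} {Y : Ω → 𝒴} {δ : ℝ} {x₁ x₂ : 𝒳}
    (h : Conn mX X Y δ x₁ x₂) : Conn mX X Y δ x₂ x₁ := by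
  rw [conn_iff] at h ⊢
  obtain ⟨y₁, y₂, h1, h2, hr⟩ := h
  exact ⟨y₂, y₁, h2, h1, (letI : Std.Symm (Step mX X Y δ) := ⟨step_symm mX X Y δ⟩; Std.Symm.symm _ _ hr)⟩

theorem condRange_subset_range (X : Ω → 𝒳) (Y : Ω → 𝒴) (y : 𝒴) :
    condRange X Y y ⊆ Set.range X := by
  rintro x ⟨ω, _, rfl⟩; exact ⟨ω, rfl⟩

theorem link {mX : Set 𝒳 → ℝ} {X : Ω → 𝒳} {Y : Ω → 𝒴} {δ : ℝ}
    (hm : IsUncertaintyFn mX) (hd : ∀ r ∈ assocSet mX X Y, δ < r)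
    {x : 𝒳} {y y' : 𝒴} (h1 : x ∈ condRange X Y y) (h2 : x ∈ condRange X Y y') :
    Relation.ReflTransGen (Step mX X Y δ) y y' := by
  by_cases hyy : y = y'
  · subst hyy; exact Relation.ReflTransGen.refl
  · apply Relation.ReflTransGen.single
    have hnum : 0 < mX (condRange X Y y' ∩ condRange X Y y) :=
      hm.2.1 _ ⟨x, h2, h1⟩
    have hden : 0 < mX (Set.range X) :=
      hm.2.1 _ ⟨x, condRange_subset_range X Y y h1⟩
    have hr : 0 < mX (condRange X Y y' ∩ condRange X Y y) / mX (Set.range X) :=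
      div_pos hnum hden
    have hy : y ∈ Set.range Y := by
      obtain ⟨ω, hω, -⟩ := h1; exact ⟨ω, hω⟩
    have hy' : y' ∈ Set.range Y := by
      obtain ⟨ω, hω, -⟩ := h2; exact ⟨ω, hω⟩
    exact hd _ ⟨ne_of_gt hr, y', hy', y, hy, fun h => hyy h.symm, rfl⟩

theorem conn_trans {mX : Set 𝒳 → ℝ} {X : Ω → 𝒳} {Y : Ω → 𝒴} {δ : ℝ}
    (hm : IsUncertaintyFn mX) (hd : ∀ r ∈ assocSet mX X Y, δ < r)
    {x₁ x₂ x₃ : 𝒳} (h : Conn mX X Y δ x₁ x₂) (h' : Conn mX X Y δ x₂ x₃) :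
    Conn mX X Y δ x₁ x₃ := by
  rw [conn_iff] at h h' ⊢
  obtain ⟨y₁, y₂, a1, a2, p⟩ := h
  obtain ⟨y₃, y₄, b1, b2, q⟩ := h'
  exact ⟨y₁, y₄, a1, b2, (p.trans (link hm hd a2 b1)).trans q⟩

theorem conn_refl {mX : Set 𝒳 → ℝ} (X : Ω → 𝒳) (Y : Ω → 𝒴) (δ : ℝ) {x : 𝒳}
    (hx : x ∈ Set.range X) : Conn mX X Y δ x x := by
  obtain ⟨ω, rfl⟩ := hx
  rw [conn_iff]
  exact ⟨Y ω, Y ω, ⟨ω, rfl, rfl⟩, ⟨ω, rfl, rfl⟩, Relation.ReflTransGen.refl⟩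

/-- Theorem 2, part: if `X` and `Y` are disassociated at levels
`(δ, δ₂)`, then the family `𝒞 = {𝒞(x) : x ∈ ⟦X⟧}` of `δ`-connected components is
a `δ`-overlap family of `⟦X⟧`, and any two distinct members of it have
intersection of uncertainty zero. -/
theorem disassociated_connComp_isOverlapFamily
    {Ω 𝒳 𝒴 : Type*} (mX : Set 𝒳 → ℝ) (mY : Set 𝒴 → ℝ)
    (hmX : IsUncertaintyFn mX) (hmY : IsUncertaintyFn mY)
    (X : Ω → 𝒳) (Y : Ω → 𝒴) (δ δ₂ : ℝ)
    (hδ : 0 ≤ δ) (hδ' : δ < 1) (hδ₂ : 0 ≤ δ₂) (hδ₂' : δ₂ < 1)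
    (hd : Disassociated mX mY X Y δ δ₂) :
    IsOverlapFamily mX X Y δ
      {S | ∃ x ∈ Set.range X, S = connComp mX X Y δ x} ∧
    ∀ x₁ ∈ Set.range X, ∀ x₂ ∈ Set.range X,
      connComp mX X Y δ x₁ ≠ connComp mX X Y δ x₂ →
        mX (connComp mX X Y δ x₁ ∩ connComp mX X Y δ x₂) = 0 := by
  obtain ⟨-, hdX, -, -⟩ := hd
  have href := fun {x} (hx : x ∈ Set.range X) => conn_refl (mX := mX) X Y δ hx
  have htr := fun {a b c : 𝒳} => conn_trans hmX hdX (x₁ := a) (x₂ := b) (x₃ := c)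
  -- components containing a common point are equal
  have hcomp_eq : ∀ x₁ x₂ : 𝒳, Conn mX X Y δ x₁ x₂ →
      connComp mX X Y δ x₁ = connComp mX X Y δ x₂ := by
    intro x₁ x₂ h12
    ext w
    constructor
    · rintro ⟨hw, hc⟩; exact ⟨hw, htr (conn_symm h12) hc⟩
    · rintro ⟨hw, hc⟩; exact ⟨hw, htr h12 hc⟩
  have hmXr : 0 ≤ mX (Set.range X) := by
    rcases Set.eq_empty_or_nonempty (Set.range X) with h | h
    · rw [h, hmX.1]
    · exact le_of_lt (hmX.2.1 _ h)
  -- distinct components are disjoint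
  have hdisj : ∀ x₁ ∈ Set.range X, ∀ x₂ ∈ Set.range X,
      connComp mX X Y δ x₁ ≠ connComp mX X Y δ x₂ →
        connComp mX X Y δ x₁ ∩ connComp mX X Y δ x₂ = ∅ := by
    intro x₁ _ x₂ _ hne
    by_contra hne'
    obtain ⟨z, ⟨-, hc1⟩, ⟨-, hc2⟩⟩ := Set.nonempty_iff_ne_empty.2 hne'
    exact hne (hcomp_eq x₁ x₂ (htr hc1 (conn_symm hc2)))
  -- condRange y ⊆ connComp x whenever x ∈ condRange y
  have hsub : ∀ (x : 𝒳) (y : 𝒴), x ∈ condRange X Y y →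
      condRange X Y y ⊆ connComp mX X Y δ x := by
    intro x y hx w hw
    refine ⟨condRange_subset_range X Y y hw, ?_⟩
    rw [conn_iff]
    exact ⟨y, y, hx, hw, Relation.ReflTransGen.refl⟩
  refine ⟨⟨?_, ?_, ?_, ?_⟩, ?_⟩
  · -- union
    apply Set.Subset.antisymm
    · rintro x ⟨S, ⟨x', -, rfl⟩, hxS⟩
      exact hxS.1
    · intro x hx
      exact ⟨connComp mX X Y δ x, ⟨x, hx, rfl⟩, hx, href hx⟩
  · -- each member is δ-connected and contains a condRange
    rintro S ⟨x, hx, rfl⟩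
    constructor
    · rintro x₁ ⟨-, hc1⟩ x₂ ⟨-, hc2⟩
      exact htr (conn_symm hc1) hc2
    · obtain ⟨ω, rfl⟩ := hx
      exact ⟨Y ω, ⟨ω, rfl⟩, hsub _ _ ⟨ω, rfl, rfl⟩⟩
  · -- overlap bound
    rintro S₁ ⟨x₁, hx₁, rfl⟩ S₂ ⟨x₂, hx₂, rfl⟩ hne
    rw [hdisj x₁ hx₁ x₂ hx₂ hne, hmX.1]
    exact mul_nonneg hδ hmXr
  · -- every condRange contained in a member
    rintro y ⟨ω, rfl⟩
    refine ⟨connComp mX X Y δ (X ω), ⟨X ω, ⟨ω, rfl⟩, rfl⟩, hsub _ _ ⟨ω, rfl, rfl⟩⟩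
  · -- zero uncertainty of intersections
    intro x₁ hx₁ x₂ hx₂ hne
    rw [hdisj x₁ hx₁ x₂ hx₂ hne, hmX.1]


end NSIT
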